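/- (Non-admissibility of substitution in a restricted cyclic system) Let P be the inductive predicate defined by the single production P(x) ⇐ P(sx), and consider the cyclic-proof system whose only inference rules are (UL′) (deriving P(x),Γ⊢Δ from P(sx),Γ⊢Δ), (UR), (Axiom), (Wk), and (Subst), with proofs required to satisfy the global trace condition. In this system the sequent P(x)⊢⊥ is provable, but it is not provable without the rule (Subst). -/

import Mathlib

set_option maxHeartbeats 1000000

namespace CyclicProofs

/-! ### Signatures, terms and substitutions of FOL_ID.
Terms are in locally-nameless style: `fvar` are free variables (named by naturals)
and `bvar` are de Bruijn indices for quantifier-bound variables. -/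

structure Signature where
  Func : Type
  arity : Func → ℕ
  OrdPred : Type
  ordArity : OrdPred → ℕ
  IndPred : Type
  indArity : IndPred → ℕ

inductive Term (S : Signature) : Type where
  | fvar : ℕ → Term S
  | bvar : ℕ → Term S
  | func : (f : S.Func) → (Fin (S.arity f) → Term S) → Term S

variable {S : Signature}

def Term.fv : Term S → Set ℕ
  | .fvar x => {x}
  | .bvar _ => ∅
  | .func _ a => ⋃ i, Term.fv (a i)

/-- A term is *atomic* if it is a variable or a constant. -/
def Term.IsAtomic : Term S → Prop
  | .fvar _ => True
  | .bvar _ => False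
  | .func f _ => S.arity f = 0

/-- Substitutions: (total) maps from variables to terms; a substitution
represents the finite mapping given by its restriction to its domain
`Subst.dom` (the set of variables it moves). -/
abbrev Subst (S : Signature) := ℕ → Term S

def Term.subst : Term S → Subst S → Term S
  | .fvar x, θ => θ x
  | .bvar n, _ => .bvar n
  | .func f a, θ => .func f (fun i => Term.subst (a i) θ)

def Subst.dom (θ : Subst S) : Set ℕ := {x | θ x ≠ Term.fvar x}

def Subst.img (θ : Subst S) : Set (Term S) := θ '' Subst.dom θ

/-- An *atomic* substitution: every term in its image is a variable or a constant. -/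
def Subst.Atomic (θ : Subst S) : Prop := ∀ x : ℕ, Term.IsAtomic (θ x)

/-- `Subst.update θ x y` is `θ[x → y]`: the substitution obtained from `θ` by
changing the image of `x` to the variable `y`. -/
def Subst.update (θ : Subst S) (x y : ℕ) : Subst S :=
  fun z => if z = x then Term.fvar y else θ z

/-- Composition `θ₁θ₂`, satisfying `t[θ₁θ₂] = (t[θ₁])[θ₂]`. -/
def Subst.comp (θ₁ θ₂ : Subst S) : Subst S := fun x => Term.subst (θ₁ x) θ₂

theorem Term.subst_comp (t : Term S) (θ₁ θ₂ : Subst S) :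
    Term.subst t (Subst.comp θ₁ θ₂) = Term.subst (Term.subst t θ₁) θ₂ := by
  induction t with
  | fvar x => rfl
  | bvar n => rfl
  | func f a ih => simp only [Term.subst]; exact congrArg _ (funext fun i => ih i)

/-- The partial-substitution closure `C_ps(Θ, X)`: the smallest set of substitutions
containing `Θ` and closed under overwriting `θ[x→y]` for `x, y ∈ X` and under
composition. -/
inductive Cps {S : Signature} (Θ : Set (Subst S)) (X : Set ℕ) : Subst S → Prop where
  | base {θ : Subst S} : θ ∈ Θ → Cps Θ X θ
  | update {θ : Subst S} {x y : ℕ} :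
      Cps Θ X θ → x ∈ X → y ∈ X → Cps Θ X (Subst.update θ x y)
  | comp {θ₁ θ₂ : Subst S} :
      Cps Θ X θ₁ → Cps Θ X θ₂ → Cps Θ X (Subst.comp θ₁ θ₂)

/-! ### Formulas of FOL_ID -/

inductive Formula (S : Signature) : Type where
  | ind : (P : S.IndPred) → (Fin (S.indArity P) → Term S) → Formula S
  | ord : (Q : S.OrdPred) → (Fin (S.ordArity Q) → Term S) → Formula S
  | eq : Term S → Term S → Formula S
  | not : Formula S → Formula S
  | or : Formula S → Formula S → Formula S
  | and : Formula S → Formula S → Formula S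
  | imp : Formula S → Formula S → Formula S
  | ex : Formula S → Formula S
  | all : Formula S → Formula S

def Formula.fv : Formula S → Set ℕ
  | .ind _ a => ⋃ i, Term.fv (a i)
  | .ord _ a => ⋃ i, Term.fv (a i)
  | .eq t u => t.fv ∪ u.fv
  | .not φ => φ.fv
  | .or φ ψ => φ.fv ∪ ψ.fv
  | .and φ ψ => φ.fv ∪ ψ.fv
  | .imp φ ψ => φ.fv ∪ ψ.fv
  | .ex φ => φ.fv
  | .all φ => φ.fv

/-- Capture-avoiding substitution of free variables (bound variables are de
Bruijn indices, so no capture can occur). -/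
def Formula.subst : Formula S → Subst S → Formula S
  | .ind P a, θ => .ind P (fun i => Term.subst (a i) θ)
  | .ord Q a, θ => .ord Q (fun i => Term.subst (a i) θ)
  | .eq t u, θ => .eq (t.subst θ) (u.subst θ)
  | .not φ, θ => .not (φ.subst θ)
  | .or φ ψ, θ => .or (φ.subst θ) (ψ.subst θ)
  | .and φ ψ, θ => .and (φ.subst θ) (ψ.subst θ)
  | .imp φ ψ, θ => .imp (φ.subst θ) (ψ.subst θ)
  | .ex φ, θ => .ex (φ.subst θ)
  | .all φ, θ => .all (φ.subst θ)

/-- Opening: replace the bound variable `k` by the term `u`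
(used to instantiate a quantifier). -/
def Term.openT : Term S → ℕ → Term S → Term S
  | .fvar x, _, _ => .fvar x
  | .bvar n, k, u => if n = k then u else .bvar n
  | .func f a, k, u => .func f (fun i => Term.openT (a i) k u)

def Formula.openF : Formula S → ℕ → Term S → Formula S
  | .ind P a, k, u => .ind P (fun i => Term.openT (a i) k u)
  | .ord Q a, k, u => .ord Q (fun i => Term.openT (a i) k u)
  | .eq t v, k, u => .eq (t.openT k u) (v.openT k u)
  | .not φ, k, u => .not (φ.openF k u)
  | .or φ ψ, k, u => .or (φ.openF k u) (ψ.openF k u)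
  | .and φ ψ, k, u => .and (φ.openF k u) (ψ.openF k u)
  | .imp φ ψ, k, u => .imp (φ.openF k u) (ψ.openF k u)
  | .ex φ, k, u => .ex (φ.openF (k+1) u)
  | .all φ, k, u => .all (φ.openF (k+1) u)

/-- The formula is an inductive-predicate atom. -/
def Formula.IsInd : Formula S → Prop
  | .ind _ _ => True
  | _ => False

noncomputable instance instDecEqFormula (S : Signature) : DecidableEq (Formula S) :=
  Classical.decEq _

/-! ### Sequents -/

/-- A sequent `Γ ⊢ Δ`: a pair of finite sets of formulas. -/
abbrev GSequent (F : Type) := Finset F × Finset F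

def fvSeq (e : GSequent (Formula S)) : Set ℕ :=
  {x | (∃ φ ∈ e.1, x ∈ Formula.fv φ) ∨ (∃ φ ∈ e.2, x ∈ Formula.fv φ)}

noncomputable def substSeq (e : GSequent (Formula S)) (θ : Subst S) : GSequent (Formula S) :=
  (e.1.image (Formula.subst · θ), e.2.image (Formula.subst · θ))

/-! ### Inductive definition sets -/

/-- A production `P(t⃗) ⇐ Q₁(u⃗₁), …, Qₙ(u⃗ₙ), P₁(t⃗₁), …, Pₘ(t⃗ₘ)`.
Its variables are the free variables occurring in it. -/
structure Production (S : Signature) where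
  pred : S.IndPred
  args : Fin (S.indArity pred) → Term S
  ordPrems : List ((Q : S.OrdPred) × (Fin (S.ordArity Q) → Term S))
  indPrems : List ((P : S.IndPred) × (Fin (S.indArity P) → Term S))

def Production.fv (pr : Production S) : Set ℕ :=
  (⋃ i, Term.fv (pr.args i)) ∪
  {x | ∃ q ∈ pr.ordPrems, ∃ i, x ∈ Term.fv (q.2 i)} ∪
  {x | ∃ p ∈ pr.indPrems, ∃ i, x ∈ Term.fv (p.2 i)}

/-- The case distinction of `Γ, P(u⃗) ⊢ Δ` for a production `pr` (whose variables
are renamed by `σ`):  `Γ, u⃗ = t⃗[σ], Q₁(u⃗₁)[σ], …, P₁(t⃗₁)[σ], … ⊢ Δ`. -/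
noncomputable def caseDist (Γ Δ : Finset (Formula S)) (P : S.IndPred)
    (u : Fin (S.indArity P) → Term S) (pr : Production S) (σ : Subst S) :
    GSequent (Formula S) :=
  @dite _ (pr.pred = P) (Classical.dec _)
    (fun h =>
      (Γ ∪ Finset.image (fun i : Fin (S.indArity P) =>
            Formula.eq (u i)
              (Term.subst (pr.args (Fin.cast (congrArg S.indArity h).symm i)) σ))
          Finset.univ
         ∪ (pr.ordPrems.map (fun q => Formula.ord q.1 (fun i => Term.subst (q.2 i) σ))).toFinset
         ∪ (pr.indPrems.map (fun p => Formula.ind p.1 (fun i => Term.subst (p.2 i) σ))).toFinset,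
       Δ))
    (fun _ => (Γ, Δ))

/-- `σ` renames the variables of the production `pr` to pairwise distinct
fresh variables (avoiding `avoid`). -/
def Freshening (σ : Subst S) (pr : Production S) (avoid : Set ℕ) : Prop :=
  (∀ z : ℕ, ∃ y : ℕ, σ z = Term.fvar y) ∧
  (∀ z ∈ Production.fv pr, ∀ y : ℕ, σ z = Term.fvar y → y ∉ avoid) ∧
  (∀ z₁ ∈ Production.fv pr, ∀ z₂ ∈ Production.fv pr, σ z₁ = σ z₂ → z₁ = z₂)

/-! ### Standard-model semantics -/

structure Structure (S : Signature) where
  Dom : Type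
  nonempty : Nonempty Dom
  funcI : (f : S.Func) → (Fin (S.arity f) → Dom) → Dom
  ordI : (Q : S.OrdPred) → (Fin (S.ordArity Q) → Dom) → Prop

noncomputable def Structure.dflt (M : Structure S) : M.Dom := Classical.choice M.nonempty

def Term.eval (M : Structure S) (ρ η : ℕ → M.Dom) : Term S → M.Dom
  | .fvar x => ρ x
  | .bvar n => η n
  | .func f a => M.funcI f (fun i => Term.eval M ρ η (a i))

/-- Interpretations of the inductive predicates in a structure. -/
abbrev IndInterp (M : Structure S) := (P : S.IndPred) → (Fin (S.indArity P) → M.Dom) → Prop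

/-- `I` is a prefixed point of the monotone operator determined by the
definition set `Φ`. -/
def PrefixedPoint (Φ : Finset (Production S)) (M : Structure S) (I : IndInterp M) : Prop :=
  ∀ pr ∈ Φ, ∀ ρ : ℕ → M.Dom,
    (∀ q ∈ pr.ordPrems, M.ordI q.1 (fun i => Term.eval M ρ (fun _ => M.dflt) (q.2 i))) →
    (∀ p ∈ pr.indPrems, I p.1 (fun i => Term.eval M ρ (fun _ => M.dflt) (p.2 i))) →
    I pr.pred (fun i => Term.eval M ρ (fun _ => M.dflt) (pr.args i))

/-- The standard (least fixed point) interpretation of the inductive predicates. -/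
def stdInterp (Φ : Finset (Production S)) (M : Structure S) : IndInterp M :=
  fun P v => ∀ I : IndInterp M, PrefixedPoint Φ M I → I P v

def push (M : Structure S) (d : M.Dom) (η : ℕ → M.Dom) : ℕ → M.Dom
  | 0 => d
  | n + 1 => η n

def Formula.sat (M : Structure S) (I : IndInterp M) :
    Formula S → (ℕ → M.Dom) → (ℕ → M.Dom) → Prop
  | .ind P a, ρ, η => I P (fun i => Term.eval M ρ η (a i))
  | .ord Q a, ρ, η => M.ordI Q (fun i => Term.eval M ρ η (a i))
  | .eq t u, ρ, η => Term.eval M ρ η t = Term.eval M ρ η u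
  | .not φ, ρ, η => ¬ Formula.sat M I φ ρ η
  | .or φ ψ, ρ, η => Formula.sat M I φ ρ η ∨ Formula.sat M I ψ ρ η
  | .and φ ψ, ρ, η => Formula.sat M I φ ρ η ∧ Formula.sat M I ψ ρ η
  | .imp φ ψ, ρ, η => Formula.sat M I φ ρ η → Formula.sat M I ψ ρ η
  | .ex φ, ρ, η => ∃ d : M.Dom, Formula.sat M I φ ρ (push M d η)
  | .all φ, ρ, η => ∀ d : M.Dom, Formula.sat M I φ ρ (push M d η)

/-- Validity of a sequent with respect to the standard models. -/
def validSeq (Φ : Finset (Production S)) (e : GSequent (Formula S)) : Prop :=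
  ∀ (M : Structure S) (ρ : ℕ → M.Dom),
    (∀ φ ∈ e.1, Formula.sat M (stdInterp Φ M) φ ρ (fun _ => M.dflt)) →
    ∃ ψ ∈ e.2, Formula.sat M (stdInterp Φ M) ψ ρ (fun _ => M.dflt)
/-! ### A generic framework for cyclic and infinitary proof systems.

A derivation system is given by a type of sequents `Q`, a type `F` of trace
tokens (occurrences of inductive-predicate atoms in antecedents), a type `N`
of rule names, a type `Sb` of substitutions, a type `App c ps` of rule
instances with conclusion `c` and premise list `ps`, a trace relation and a
progress relation along rule instances, and the set of substitutions used by
a rule instance. -/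

structure DerivSystem (Q F N Sb : Type) where
  App : Q → List Q → Type
  name : {c : Q} → {ps : List Q} → App c ps → N
  trace : {c : Q} → {ps : List Q} → App c ps → ℕ → F → F → Prop
  prog : {c : Q} → {ps : List Q} → App c ps → ℕ → F → F → Prop
  substs : {c : Q} → {ps : List Q} → App c ps → Set Sb
  inAnt : Q → F → Prop

variable {Q F N Sb : Type}

/-- A pre-proof of a cyclic-proof system: a finite derivation tree (nodes are
lists of child indices, the root is `[]`), whose non-axiom leaves (*buds*) are
each assigned an internal node (its *companion*) labeled by a syntactically
identical sequent. Every non-bud node carries a rule instance. -/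
structure CPreProof (D : DerivSystem Q F N Sb) where
  dom : Set (List ℕ)
  fin : dom.Finite
  root_mem : ([] : List ℕ) ∈ dom
  down : ∀ (p : List ℕ) (i : ℕ), p ++ [i] ∈ dom → p ∈ dom
  seq : List ℕ → Q
  prems : List ℕ → List Q
  bud : List ℕ → Bool
  rule : ∀ (p : List ℕ), p ∈ dom → bud p = false → D.App (seq p) (prems p)
  child_mem : ∀ (p : List ℕ), p ∈ dom → bud p = false →
      ∀ i : ℕ, (p ++ [i] ∈ dom ↔ i < (prems p).length)
  child_seq : ∀ (p : List ℕ) (hp : p ∈ dom) (hb : bud p = false)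
      (i : ℕ) (h : i < (prems p).length), seq (p ++ [i]) = (prems p).get ⟨i, h⟩
  bud_leaf : ∀ (p : List ℕ), p ∈ dom → bud p = true → ∀ i : ℕ, p ++ [i] ∉ dom
  comp : List ℕ → List ℕ
  comp_mem : ∀ (p : List ℕ), p ∈ dom → bud p = true → comp p ∈ dom
  comp_not_bud : ∀ (p : List ℕ), p ∈ dom → bud p = true → bud (comp p) = false
  comp_seq : ∀ (p : List ℕ), p ∈ dom → bud p = true → seq (comp p) = seq p

variable {D : DerivSystem Q F N Sb}

/-- An infinite path in the graph of a cyclic pre-proof (edges: conclusions to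
premises, and buds to their companions). -/
structure CPath (T : CPreProof D) where
  pos : ℕ → List ℕ
  mem : ∀ n, pos n ∈ T.dom
  step : ∀ n, (T.bud (pos n) = true ∧ pos (n + 1) = T.comp (pos n)) ∨
              (∃ i : ℕ, pos (n + 1) = pos n ++ [i] ∧ pos n ++ [i] ∈ T.dom)

/-- One trace step from node `p` (token `C`) to node `p'` (token `C'`);
`b = true` records a progressing step. -/
def CPreProof.tstep (T : CPreProof D) (p p' : List ℕ) (C C' : F) (b : Bool) : Prop :=
  (T.bud p = true ∧ p' = T.comp p ∧ C' = C ∧ D.inAnt (T.seq p) C ∧ b = false) ∨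
  (∃ (hp : p ∈ T.dom) (hb : T.bud p = false) (i : ℕ), p' = p ++ [i] ∧
      D.trace (T.rule p hp hb) i C C' ∧
      (b = true → D.prog (T.rule p hp hb) i C C'))

/-- There is an infinitely progressing trace following (a tail of) the path. -/
def CPath.hasInfTrace {T : CPreProof D} (π : CPath T) : Prop :=
  ∃ (k : ℕ) (C : ℕ → F) (b : ℕ → Bool),
    (∀ n, k ≤ n → T.tstep (π.pos n) (π.pos (n + 1)) (C n) (C (n + 1)) (b n)) ∧
    (∀ m, ∃ n, m ≤ n ∧ b n = true)

/-- The global trace condition. -/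
def CPreProof.GTC (T : CPreProof D) : Prop := ∀ π : CPath T, π.hasInfTrace

def CPreProof.namesUsed (T : CPreProof D) : Set N :=
  {ν | ∃ (p : List ℕ) (hp : p ∈ T.dom) (hb : T.bud p = false), D.name (T.rule p hp hb) = ν}

/-- `Θ(Pr)`: the set of substitutions used in instances of (Subst) in `Pr`. -/
def CPreProof.Theta (T : CPreProof D) : Set Sb :=
  {s | ∃ (p : List ℕ) (hp : p ∈ T.dom) (hb : T.bud p = false), s ∈ D.substs (T.rule p hp hb)}

/-- Identify a bud with its companion. -/
def CPreProof.resolve (T : CPreProof D) (q : List ℕ) : List ℕ :=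
  if T.bud q then T.comp q else q

/-- Provability by a cyclic proof using only rules whose names are `allowed`. -/
def DerivSystem.ProvableWith (D : DerivSystem Q F N Sb) (allowed : Set N) (e : Q) : Prop :=
  ∃ T : CPreProof D, T.seq [] = e ∧ T.GTC ∧ T.namesUsed ⊆ allowed

/-- A chain of applications of the rule named `sn` (i.e. (Subst)) and
bud-companion identifications, from `q` up to a node `q'` carrying a
rule instance not named `sn`. -/
inductive CPreProof.substChain (T : CPreProof D) (sn : N) : List ℕ → List ℕ → Prop where
  | here {q : List ℕ} (hq : q ∈ T.dom) (hb : T.bud q = false)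
      (hr : D.name (T.rule q hq hb) ≠ sn) : substChain T sn q q
  | jump {q q' : List ℕ} (hq : q ∈ T.dom) (hb : T.bud q = true) :
      substChain T sn (T.comp q) q' → substChain T sn q q'
  | sub {q q' : List ℕ} (hq : q ∈ T.dom) (hb : T.bud q = false)
      (hs : D.name (T.rule q hq hb) = sn) :
      substChain T sn (q ++ [0]) q' → substChain T sn q q'

/-- A trace from the token `C` at `q`, through applications of the rule named
`sn` ((Subst)) and bud-companion identifications, followed by one application
of a rule not named `sn`, into its `j`-th premise, ending in the token `C'`;
`b = true` records that the final step progresses. -/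
inductive CPreProof.chunkTrace (T : CPreProof D) (sn : N) :
    List ℕ → ℕ → F → F → Bool → Prop where
  | here {q : List ℕ} {j : ℕ} {C C' : F} {b : Bool}
      (hq : q ∈ T.dom) (hb : T.bud q = false)
      (hr : D.name (T.rule q hq hb) ≠ sn)
      (ht : D.trace (T.rule q hq hb) j C C')
      (hpr : b = true → D.prog (T.rule q hq hb) j C C') :
      chunkTrace T sn q j C C' b
  | jump {q : List ℕ} {j : ℕ} {C C' : F} {b : Bool}
      (hq : q ∈ T.dom) (hb : T.bud q = true) :
      chunkTrace T sn (T.comp q) j C C' b → chunkTrace T sn q j C C' b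
  | sub {q : List ℕ} {j : ℕ} {C C₁ C' : F} {b : Bool}
      (hq : q ∈ T.dom) (hb : T.bud q = false)
      (hs : D.name (T.rule q hq hb) = sn)
      (ht : D.trace (T.rule q hq hb) 0 C C₁) :
      chunkTrace T sn (q ++ [0]) j C₁ C' b → chunkTrace T sn q j C C' b

/-- The step at time `m` of the path `π'` passes through a (Subst) rule or a
bud-companion edge. -/
def CPreProof.PassAt (T : CPreProof D) (sn : N) (π : CPath T) (m : ℕ) : Prop :=
  (T.bud (π.pos m) = true ∧ π.pos (m + 1) = T.comp (π.pos m)) ∨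
  (∃ (hp : π.pos m ∈ T.dom) (hb : T.bud (π.pos m) = false),
      D.name (T.rule (π.pos m) hp hb) = sn ∧ π.pos (m + 1) = π.pos m ++ [0])

/-- The step at time `m` of the path goes to the `j`-th premise of a rule
instance not named `sn`. -/
def CPreProof.ChildAt (T : CPreProof D) (sn : N) (π : CPath T) (m j : ℕ) : Prop :=
  π.pos (m + 1) = π.pos m ++ [j] ∧
  ∃ (hp : π.pos m ∈ T.dom) (hb : T.bud (π.pos m) = false),
    D.name (T.rule (π.pos m) hp hb) ≠ sn

/-- The step at time `m` of the path is a bud-companion edge. -/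
def CPreProof.BudAt (T : CPreProof D) (π : CPath T) (m : ℕ) : Prop :=
  T.bud (π.pos m) = true ∧ π.pos (m + 1) = T.comp (π.pos m)

/-! #### Infinitary pre-proofs (possibly infinite derivation trees, all of
whose leaves are axioms, i.e. every node carries a rule instance). -/

structure IPreProof (D : DerivSystem Q F N Sb) where
  dom : Set (List ℕ)
  root_mem : ([] : List ℕ) ∈ dom
  down : ∀ (p : List ℕ) (i : ℕ), p ++ [i] ∈ dom → p ∈ dom
  seq : List ℕ → Q
  prems : List ℕ → List Q
  rule : ∀ (p : List ℕ), p ∈ dom → D.App (seq p) (prems p)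
  child_mem : ∀ (p : List ℕ), p ∈ dom → ∀ i : ℕ, (p ++ [i] ∈ dom ↔ i < (prems p).length)
  child_seq : ∀ (p : List ℕ) (hp : p ∈ dom) (i : ℕ) (h : i < (prems p).length),
      seq (p ++ [i]) = (prems p).get ⟨i, h⟩

structure IPath (T : IPreProof D) where
  pos : ℕ → List ℕ
  mem : ∀ n, pos n ∈ T.dom
  step : ∀ n, ∃ i : ℕ, pos (n + 1) = pos n ++ [i] ∧ pos n ++ [i] ∈ T.dom

def IPreProof.tstep (T : IPreProof D) (p p' : List ℕ) (C C' : F) (b : Bool) : Prop :=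
  ∃ (hp : p ∈ T.dom) (i : ℕ), p' = p ++ [i] ∧
    D.trace (T.rule p hp) i C C' ∧ (b = true → D.prog (T.rule p hp) i C C')

def IPath.hasInfTrace {T : IPreProof D} (π : IPath T) : Prop :=
  ∃ (k : ℕ) (C : ℕ → F) (b : ℕ → Bool),
    (∀ n, k ≤ n → T.tstep (π.pos n) (π.pos (n + 1)) (C n) (C (n + 1)) (b n)) ∧
    (∀ m, ∃ n, m ≤ n ∧ b n = true)

/-- The global trace condition for infinitary pre-proofs. -/
def IPreProof.GTC (T : IPreProof D) : Prop := ∀ π : IPath T, π.hasInfTrace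

def IPreProof.namesUsed (T : IPreProof D) : Set N :=
  {ν | ∃ (p : List ℕ) (hp : p ∈ T.dom), D.name (T.rule p hp) = ν}

def IPreProof.Theta (T : IPreProof D) : Set Sb :=
  {s | ∃ (p : List ℕ) (hp : p ∈ T.dom), s ∈ D.substs (T.rule p hp)}
/-! ### The rules of `CLKID^ω` and `LKID^ω` -/

inductive RuleName : Type where
  | ax | wk | cut | subst
  | notL | notR | orL | orR | andL | andR | impL | impR
  | allL | allR | exL | exR | eqL | eqR | ul | ur
  | freshL | frame
  deriving DecidableEq

/-- The substitution `[t/x, u/y]`. -/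
def subst2 (x y : ℕ) (t u : Term S) : Subst S :=
  fun z => if z = x then t else if z = y then u else Term.fvar z

/-- Rule instances of `CLKID^ω`/`LKID^ω` (plus the extra rule `(fresh L)`,
which is *not* counted among the `CLKID^ω` rules; see `clkidNames`). -/
inductive RuleApp {S : Signature} (Φ : Finset (Production S)) :
    GSequent (Formula S) → List (GSequent (Formula S)) → Type where
  | ax (Γ Δ : Finset (Formula S)) (h : (Γ ∩ Δ).Nonempty) :
      RuleApp Φ (Γ, Δ) []
  | wk (Γ Δ Γ' Δ' : Finset (Formula S)) (h1 : Γ' ⊆ Γ) (h2 : Δ' ⊆ Δ) :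
      RuleApp Φ (Γ, Δ) [(Γ', Δ')]
  | cut (Γ Δ : Finset (Formula S)) (φ : Formula S) :
      RuleApp Φ (Γ, Δ) [(Γ, insert φ Δ), (insert φ Γ, Δ)]
  | substR (Γ Δ : Finset (Formula S)) (θ : Subst S) (hθ : (Subst.dom θ).Finite) :
      RuleApp Φ (Γ.image (Formula.subst · θ), Δ.image (Formula.subst · θ)) [(Γ, Δ)]
  | notL (Γ Δ : Finset (Formula S)) (φ : Formula S) :
      RuleApp Φ (insert (Formula.not φ) Γ, Δ) [(Γ, insert φ Δ)]
  | notR (Γ Δ : Finset (Formula S)) (φ : Formula S) :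
      RuleApp Φ (Γ, insert (Formula.not φ) Δ) [(insert φ Γ, Δ)]
  | orL (Γ Δ : Finset (Formula S)) (φ ψ : Formula S) :
      RuleApp Φ (insert (Formula.or φ ψ) Γ, Δ) [(insert φ Γ, Δ), (insert ψ Γ, Δ)]
  | orR (Γ Δ : Finset (Formula S)) (φ ψ : Formula S) :
      RuleApp Φ (Γ, insert (Formula.or φ ψ) Δ) [(Γ, insert φ (insert ψ Δ))]
  | andL (Γ Δ : Finset (Formula S)) (φ ψ : Formula S) :
      RuleApp Φ (insert (Formula.and φ ψ) Γ, Δ) [(insert φ (insert ψ Γ), Δ)]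
  | andR (Γ Δ : Finset (Formula S)) (φ ψ : Formula S) :
      RuleApp Φ (Γ, insert (Formula.and φ ψ) Δ) [(Γ, insert φ Δ), (Γ, insert ψ Δ)]
  | impL (Γ Δ : Finset (Formula S)) (φ ψ : Formula S) :
      RuleApp Φ (insert (Formula.imp φ ψ) Γ, Δ) [(Γ, insert φ Δ), (insert ψ Γ, Δ)]
  | impR (Γ Δ : Finset (Formula S)) (φ ψ : Formula S) :
      RuleApp Φ (Γ, insert (Formula.imp φ ψ) Δ) [(insert φ Γ, insert ψ Δ)]
  | allL (Γ Δ : Finset (Formula S)) (φ : Formula S) (t : Term S) :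
      RuleApp Φ (insert (Formula.all φ) Γ, Δ) [(insert (φ.openF 0 t) Γ, Δ)]
  | allR (Γ Δ : Finset (Formula S)) (φ : Formula S) (y : ℕ)
      (hy : y ∉ fvSeq ((Γ, insert (Formula.all φ) Δ) : GSequent (Formula S))) :
      RuleApp Φ (Γ, insert (Formula.all φ) Δ) [(Γ, insert (φ.openF 0 (Term.fvar y)) Δ)]
  | exL (Γ Δ : Finset (Formula S)) (φ : Formula S) (y : ℕ)
      (hy : y ∉ fvSeq ((insert (Formula.ex φ) Γ, Δ) : GSequent (Formula S))) :
      RuleApp Φ (insert (Formula.ex φ) Γ, Δ) [(insert (φ.openF 0 (Term.fvar y)) Γ, Δ)]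
  | exR (Γ Δ : Finset (Formula S)) (φ : Formula S) (t : Term S) :
      RuleApp Φ (Γ, insert (Formula.ex φ) Δ) [(Γ, insert (φ.openF 0 t) Δ)]
  | eqL (Γ Δ : Finset (Formula S)) (x y : ℕ) (t u : Term S) :
      RuleApp Φ
        (insert (Formula.eq t u) (Γ.image (Formula.subst · (subst2 x y t u))),
         Δ.image (Formula.subst · (subst2 x y t u)))
        [(Γ.image (Formula.subst · (subst2 x y u t)),
          Δ.image (Formula.subst · (subst2 x y u t)))]
  | eqR (Γ Δ : Finset (Formula S)) (t : Term S) :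
      RuleApp Φ (Γ, insert (Formula.eq t t) Δ) []
  | ul (Γ Δ : Finset (Formula S)) (P : S.IndPred) (u : Fin (S.indArity P) → Term S)
      (prods : List (Production S)) (σs : List (Subst S))
      (hlen : prods.length = σs.length) (hnd : prods.Nodup)
      (hall : ∀ pr : Production S, pr ∈ prods ↔ pr ∈ Φ ∧ pr.pred = P)
      (hfresh : ∀ pσ ∈ prods.zip σs,
        Freshening pσ.2 pσ.1
          (fvSeq ((insert (Formula.ind P u) Γ, Δ) : GSequent (Formula S)))) :
      RuleApp Φ (insert (Formula.ind P u) Γ, Δ)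
        ((prods.zip σs).map (fun pσ => caseDist Γ Δ P u pσ.1 pσ.2))
  | ur (Γ Δ : Finset (Formula S)) (pr : Production S) (hpr : pr ∈ Φ) (σ : Subst S) :
      RuleApp Φ (Γ, insert (Formula.ind pr.pred (fun i => Term.subst (pr.args i) σ)) Δ)
        ((pr.ordPrems.map (fun q => (Γ, insert (Formula.ord q.1 (fun i => Term.subst (q.2 i) σ)) Δ)))
          ++ (pr.indPrems.map (fun p => (Γ, insert (Formula.ind p.1 (fun i => Term.subst (p.2 i) σ)) Δ))))
  | freshL (Γ Δ : Finset (Formula S)) (y : ℕ) (t : Term S)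
      (hy : y ∉ fvSeq ((Γ, Δ) : GSequent (Formula S)) ∧ y ∉ Term.fv t) :
      RuleApp Φ (Γ, Δ) [(insert (Formula.eq (Term.fvar y) t) Γ, Δ)]

variable {Φ : Finset (Production S)}

def RuleApp.name : {c : GSequent (Formula S)} → {ps : List (GSequent (Formula S))} →
    RuleApp Φ c ps → RuleName
  | _, _, .ax .. => .ax
  | _, _, .wk .. => .wk
  | _, _, .cut .. => .cut
  | _, _, .substR .. => .subst
  | _, _, .notL .. => .notL
  | _, _, .notR .. => .notR
  | _, _, .orL .. => .orL
  | _, _, .orR .. => .orR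
  | _, _, .andL .. => .andL
  | _, _, .andR .. => .andR
  | _, _, .impL .. => .impL
  | _, _, .impR .. => .impR
  | _, _, .allL .. => .allL
  | _, _, .allR .. => .allR
  | _, _, .exL .. => .exL
  | _, _, .exR .. => .exR
  | _, _, .eqL .. => .eqL
  | _, _, .eqR .. => .eqR
  | _, _, .ul .. => .ul
  | _, _, .ur .. => .ur
  | _, _, .freshL .. => .freshL

def RuleApp.substsOf : {c : GSequent (Formula S)} → {ps : List (GSequent (Formula S))} →
    RuleApp Φ c ps → Set (Subst S)
  | _, _, .substR _ _ θ _ => {θ}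
  | _, _, _ => ∅

/-- The "corresponding occurrence" relation of a rule instance: how an
inductive-predicate occurrence in the antecedent of the conclusion relates to
one in the antecedent of the `k`-th premise. -/
def RuleApp.core : {c : GSequent (Formula S)} → {ps : List (GSequent (Formula S))} →
    RuleApp Φ c ps → ℕ → Formula S → Formula S → Prop
  | _, _, .substR _ _ θ _ => fun _ C C' => C = Formula.subst C' θ
  | _, _, .eqL Γ _ x y t u => fun _ C C' =>
      ∃ ψ ∈ Γ, C = Formula.subst ψ (subst2 x y t u) ∧ C' = Formula.subst ψ (subst2 x y u t)
  | _, _, .ul _ _ P u prods σs _ _ _ _ => fun k C C' =>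
      (C ≠ Formula.ind P u ∧ C' = C) ∨
      (C = Formula.ind P u ∧ ∃ h : k < (prods.zip σs).length,
        ∃ pp ∈ ((prods.zip σs).get ⟨k, h⟩).1.indPrems,
          C' = Formula.ind pp.1 (fun i => Term.subst (pp.2 i) ((prods.zip σs).get ⟨k, h⟩).2))
  | _, _, _ => fun _ C C' => C' = C

/-- The progressing case: at `(UL)`, the traced occurrence is the unfolded one. -/
def RuleApp.progCore : {c : GSequent (Formula S)} → {ps : List (GSequent (Formula S))} →
    RuleApp Φ c ps → ℕ → Formula S → Formula S → Prop
  | _, _, .ul _ _ P u prods σs _ _ _ _ => fun k C C' =>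
      C = Formula.ind P u ∧ ∃ h : k < (prods.zip σs).length,
        ∃ pp ∈ ((prods.zip σs).get ⟨k, h⟩).1.indPrems,
          C' = Formula.ind pp.1 (fun i => Term.subst (pp.2 i) ((prods.zip σs).get ⟨k, h⟩).2)
  | _, _, _ => fun _ _ _ => False

/-- A trace step along a rule instance, into its `k`-th premise. -/
def RuleApp.traceStep {c : GSequent (Formula S)} {ps : List (GSequent (Formula S))}
    (r : RuleApp Φ c ps) (k : ℕ) (C C' : Formula S) : Prop :=
  C ∈ c.1 ∧ Formula.IsInd C ∧ Formula.IsInd C' ∧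
  (∃ h : k < ps.length, C' ∈ (ps.get ⟨k, h⟩).1) ∧ RuleApp.core r k C C'

/-- A progressing trace step. -/
def RuleApp.progStep {c : GSequent (Formula S)} {ps : List (GSequent (Formula S))}
    (r : RuleApp Φ c ps) (k : ℕ) (C C' : Formula S) : Prop :=
  RuleApp.traceStep r k C C' ∧ RuleApp.progCore r k C C'

/-- The derivation system of `CLKID^ω` and `LKID^ω` (cyclic pre-proofs of
`CLKID^ω` are `CPreProof (CLKID S Φ)`, infinitary pre-proofs of `LKID^ω` are
`IPreProof (CLKID S Φ)`). -/
noncomputable def CLKID (S : Signature) (Φ : Finset (Production S)) :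
    DerivSystem (GSequent (Formula S)) (Formula S) RuleName (Subst S) where
  App := RuleApp Φ
  name := fun r => RuleApp.name r
  trace := fun r k C C' => RuleApp.traceStep r k C C'
  prog := fun r k C C' => RuleApp.progStep r k C C'
  substs := fun r => RuleApp.substsOf r
  inAnt := fun e C => C ∈ e.1 ∧ Formula.IsInd C

/-- The names of the genuine `CLKID^ω` rules: everything except the extra
rule `(fresh L)` (and the separation-logic frame rule name). -/
def clkidNames : Set RuleName := {ν | ν ≠ RuleName.freshL ∧ ν ≠ RuleName.frame}

/-- The free variables of a cyclic pre-proof. -/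
def CPreProof.FVc (T : CPreProof (CLKID S Φ)) : Set ℕ :=
  {x | ∃ p ∈ T.dom, x ∈ fvSeq (T.seq p)}

/-- The free variables of an infinitary pre-proof. -/
def IPreProof.FVi (T : IPreProof (CLKID S Φ)) : Set ℕ :=
  {x | ∃ p ∈ T.dom, x ∈ fvSeq (T.seq p)}

/-- The signature with a single unary function symbol `s` and a single unary
inductive predicate symbol `P`. -/
def sigP : Signature where
  Func := Unit
  arity := fun _ => 1
  OrdPred := Empty
  ordArity := fun q => q.elim
  IndPred := Unit
  indArity := fun _ => 1

/-- The term `s t`. -/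
def sTerm (t : Term sigP) : Term sigP := Term.func () (fun _ => t)

/-- The atom `P(t)`. -/
def Pat (t : Term sigP) : Formula sigP := Formula.ind () (fun _ => t)

/-- The rules of the restricted cyclic-proof system for the inductive
predicate `P` defined by the single production `P(x) ⇐ P(sx)`: only `(UL')`
(in-place left unfolding, without fresh variables and equalities), `(UR)`,
`(Axiom)`, `(Wk)` and `(Subst)`. -/
inductive RRule : GSequent (Formula sigP) → List (GSequent (Formula sigP)) → Type where
  | ax (Γ Δ : Finset (Formula sigP)) (h : (Γ ∩ Δ).Nonempty) : RRule (Γ, Δ) []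
  | wk (Γ Δ Γ' Δ' : Finset (Formula sigP)) (h1 : Γ' ⊆ Γ) (h2 : Δ' ⊆ Δ) :
      RRule (Γ, Δ) [(Γ', Δ')]
  | substR (Γ Δ : Finset (Formula sigP)) (θ : Subst sigP) (hθ : (Subst.dom θ).Finite) :
      RRule (Γ.image (Formula.subst · θ), Δ.image (Formula.subst · θ)) [(Γ, Δ)]
  | ul' (Γ Δ : Finset (Formula sigP)) (t : Term sigP) :
      RRule (insert (Pat t) Γ, Δ) [(insert (Pat (sTerm t)) Γ, Δ)]
  | ur' (Γ Δ : Finset (Formula sigP)) (t : Term sigP) :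
      RRule (Γ, insert (Pat t) Δ) [(Γ, insert (Pat (sTerm t)) Δ)]

def RRule.rname : {c : GSequent (Formula sigP)} → {ps : List (GSequent (Formula sigP))} →
    RRule c ps → RuleName
  | _, _, .ax .. => .ax
  | _, _, .wk .. => .wk
  | _, _, .substR .. => .subst
  | _, _, .ul' .. => .ul
  | _, _, .ur' .. => .ur

def RRule.core : {c : GSequent (Formula sigP)} → {ps : List (GSequent (Formula sigP))} →
    RRule c ps → ℕ → Formula sigP → Formula sigP → Prop
  | _, _, .substR _ _ θ _ => fun _ C C' => C = Formula.subst C' θ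
  | _, _, .ul' _ _ t => fun _ C C' =>
      (C ≠ Pat t ∧ C' = C) ∨ (C = Pat t ∧ C' = Pat (sTerm t))
  | _, _, _ => fun _ C C' => C' = C

def RRule.progCore : {c : GSequent (Formula sigP)} → {ps : List (GSequent (Formula sigP))} →
    RRule c ps → ℕ → Formula sigP → Formula sigP → Prop
  | _, _, .ul' _ _ t => fun _ C C' => C = Pat t ∧ C' = Pat (sTerm t)
  | _, _, _ => fun _ _ _ => False

def RRule.traceStep {c : GSequent (Formula sigP)} {ps : List (GSequent (Formula sigP))}
    (r : RRule c ps) (k : ℕ) (C C' : Formula sigP) : Prop :=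
  C ∈ c.1 ∧ Formula.IsInd C ∧ Formula.IsInd C' ∧
  (∃ h : k < ps.length, C' ∈ (ps.get ⟨k, h⟩).1) ∧ RRule.core r k C C'

/-- The restricted cyclic-proof system with rules `(UL')`, `(UR)`, `(Axiom)`,
`(Wk)` and `(Subst)`. -/
noncomputable def RSYS : DerivSystem (GSequent (Formula sigP)) (Formula sigP) RuleName (Subst sigP) where
  App := RRule
  name := fun r => RRule.rname r
  trace := fun r k C C' => RRule.traceStep r k C C'
  prog := fun r k C C' => RRule.traceStep r k C C' ∧ RRule.progCore r k C C'
  substs := fun {_ _} r => match r with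
    | .substR _ _ θ _ => {θ}
    | _ => ∅
  inAnt := fun e C => C ∈ e.1 ∧ Formula.IsInd C

/-! ### Auxiliary development for Statement 15 -/

section NonAdmissibility

noncomputable section

/-- Size of a term of `sigP` (number of `s`'s). -/
def tsize : Term sigP → ℕ
  | .fvar _ => 0
  | .bvar _ => 0
  | .func _ a => tsize (a ⟨0, Nat.one_pos⟩) + 1

/-- Size of a formula of `sigP`. -/
def fsize : Formula sigP → ℕ
  | .ind _ a => tsize (a ⟨0, Nat.one_pos⟩)
  | _ => 0

lemma fsize_Pat (t : Term sigP) : fsize (Pat t) = tsize t := rfl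

lemma tsize_sTerm (t : Term sigP) : tsize (sTerm t) = tsize t + 1 := by
  simp [tsize, sTerm]

def xv : Term sigP := Term.fvar 0

def e0 : GSequent (Formula sigP) := ({Pat xv}, ∅)

def e1 : GSequent (Formula sigP) := ({Pat (sTerm xv)}, ∅)

def θ0 : Subst sigP := fun z => if z = 0 then sTerm xv else Term.fvar z

lemma θ0_dom : (Subst.dom θ0).Finite := by
  apply Set.Finite.subset (Set.finite_singleton 0)
  intro z hz
  simp only [Subst.dom, Set.mem_setOf_eq, θ0] at hz
  by_cases h : z = 0
  · simpa using h
  · simp [h] at hz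

lemma subst_Pat (t : Term sigP) (θ : Subst sigP) :
    Formula.subst (Pat t) θ = Pat (Term.subst t θ) := rfl

lemma θ0_x : Term.subst xv θ0 = sTerm xv := rfl

/-- Casting a rule instance along equalities of conclusion and premises. -/
def castR {c c' : GSequent (Formula sigP)} {ps ps' : List (GSequent (Formula sigP))}
    (h : c = c') (h2 : ps = ps') (r : RRule c ps) : RRule c' ps' := h ▸ h2 ▸ r

lemma castR_trace {c c' : GSequent (Formula sigP)} {ps ps' : List (GSequent (Formula sigP))}
    (h : c = c') (h2 : ps = ps') (r : RRule c ps) (k : ℕ) (C C' : Formula sigP) :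
    RRule.traceStep (castR h h2 r) k C C' ↔ RRule.traceStep r k C C' := by
  subst h; subst h2; exact Iff.rfl

lemma castR_prog {c c' : GSequent (Formula sigP)} {ps ps' : List (GSequent (Formula sigP))}
    (h : c = c') (h2 : ps = ps') (r : RRule c ps) (k : ℕ) (C C' : Formula sigP) :
    RRule.progCore (castR h h2 r) k C C' ↔ RRule.progCore r k C C' := by
  subst h; subst h2; exact Iff.rfl

lemma hc0 : ((insert (Pat xv) ∅ : Finset (Formula sigP)), (∅ : Finset (Formula sigP))) = e0 := by
  simp [e0]

lemma hp0 : [((insert (Pat (sTerm xv)) ∅ : Finset (Formula sigP)), (∅ : Finset (Formula sigP)))]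
    = [e1] := by simp [e1]

def r0 : RRule e0 [e1] := castR hc0 hp0 (RRule.ul' ∅ ∅ xv)

lemma hc1 : ((({Pat xv} : Finset (Formula sigP)).image (Formula.subst · θ0),
    ((∅ : Finset (Formula sigP)).image (Formula.subst · θ0))) : GSequent (Formula sigP)) = e1 := by
  simp [e1, Finset.image_singleton, subst_Pat, θ0_x]

def r1 : RRule e1 [e0] := castR hc1 rfl (RRule.substR {Pat xv} ∅ θ0 θ0_dom)

def domT : Set (List ℕ) := {[], [0], [0, 0]}

def seqT : List ℕ → GSequent (Formula sigP) := fun p => if p = [0] then e1 else e0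

def premsT : List ℕ → List (GSequent (Formula sigP)) := fun p =>
  if p = [] then [e1] else if p = [0] then [e0] else []

def budT : List ℕ → Bool := fun p => decide (p = [0, 0])

def ruleT (p : List ℕ) (hp : p ∈ domT) (hb : budT p = false) : RRule (seqT p) (premsT p) :=
  if h : p = [] then by subst h; exact r0
  else if h' : p = [0] then by subst h'; exact r1
  else by
    exfalso
    rcases hp with h'' | h'' | h''
    · exact h h''
    · exact h' h''
    · rw [h''] at hb; simp [budT] at hb

lemma append_eq_single {p : List ℕ} {i a : ℕ} : p ++ [i] = [a] ↔ p = [] ∧ i = a := by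
  cases p <;> simp_all

lemma append_eq_pair {p : List ℕ} {i a b : ℕ} : p ++ [i] = [a, b] ↔ p = [a] ∧ i = b := by
  cases p with
  | nil => simp
  | cons c q => simp [append_eq_single, and_assoc]

lemma mem_domT {p : List ℕ} : p ∈ domT ↔ p = [] ∨ p = [0] ∨ p = [0, 0] := by
  simp [domT, Set.mem_insert_iff, Set.mem_singleton_iff]

/-- The cyclic proof of `P(x) ⊢` using `(UL')`, `(Subst)` and a bud at `[0,0]`
with companion the root. -/
def T1 : CPreProof RSYS where
  dom := domT
  fin := (Set.finite_singleton _).insert _ |>.insert _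
  root_mem := by simp [domT]
  down := by
    intro p i h
    rw [mem_domT] at h ⊢
    rcases h with h | h | h
    · simp at h
    · rw [append_eq_single] at h; exact Or.inl h.1
    · rw [append_eq_pair] at h; exact Or.inr (Or.inl h.1)
  seq := seqT
  prems := premsT
  bud := budT
  rule := ruleT
  child_mem := by
    intro p hp hb i
    rw [mem_domT] at hp
    rcases hp with rfl | rfl | rfl
    · rw [mem_domT, premsT]
      simp [append_eq_single, append_eq_pair]
    · rw [mem_domT, premsT]
      simp [append_eq_single, append_eq_pair]
    · simp [budT] at hb
  child_seq := by
    intro p hp hb i h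
    rw [mem_domT] at hp
    rcases hp with rfl | rfl | rfl
    · simp only [premsT] at h ⊢
      have : i = 0 := by simpa using h
      subst this; rfl
    · simp only [premsT] at h ⊢
      have : i = 0 := by simpa using h
      subst this; rfl
    · simp [budT] at hb
  bud_leaf := by
    intro p hp hb i
    have hpp : p = [0, 0] := by simpa [budT] using hb
    subst hpp
    intro hc
    rw [mem_domT] at hc
    rcases hc with h | h | h
    · simp at h
    · rw [append_eq_single] at h; simp at h
    · rw [append_eq_pair] at h; simp at h
  comp := fun _ => []
  comp_mem := by intro p hp hb; rw [mem_domT]; exact Or.inl rfl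
  comp_not_bud := by intro p hp hb; simp [budT]
  comp_seq := by
    intro p hp hb
    have hpp : p = [0, 0] := by simpa [budT] using hb
    subst hpp; rfl

lemma T1_rule_nil (hp : ([] : List ℕ) ∈ T1.dom) (hb : T1.bud [] = false) :
    T1.rule [] hp hb = r0 := rfl

lemma T1_rule_zero (hp : ([0] : List ℕ) ∈ T1.dom) (hb : T1.bud [0] = false) :
    T1.rule [0] hp hb = r1 := rfl

lemma trace_r0 : RRule.traceStep r0 0 (Pat xv) (Pat (sTerm xv)) := by
  rw [r0, castR_trace]
  refine ⟨Finset.mem_insert_self _ _, trivial, trivial, ⟨by simp, Finset.mem_insert_self _ _⟩,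
    Or.inr ⟨rfl, rfl⟩⟩

lemma prog_r0 : RRule.progCore r0 0 (Pat xv) (Pat (sTerm xv)) := by
  rw [r0, castR_prog]
  exact ⟨rfl, rfl⟩

lemma trace_r1 : RRule.traceStep r1 0 (Pat (sTerm xv)) (Pat xv) := by
  refine (castR_trace (ps := [({Pat xv}, (∅ : Finset (Formula sigP)))]) hc1 rfl (RRule.substR {Pat xv} ∅ θ0 θ0_dom) 0 _ _).mpr ?_
  refine ⟨?_, trivial, trivial, ⟨by simp, Finset.mem_singleton_self _⟩, ?_⟩
  · rw [Finset.image_singleton, subst_Pat, θ0_x]; exact Finset.mem_singleton_self _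
  · show Pat (sTerm xv) = Formula.subst (Pat xv) θ0
    rw [subst_Pat, θ0_x]

theorem T1_gtc : T1.GTC := by
  intro π
  have hmem : ∀ n, π.pos n = [] ∨ π.pos n = [0] ∨ π.pos n = [0, 0] := fun n =>
    mem_domT.mp (π.mem n)
  have hnext : ∀ n, (π.pos n = [] → π.pos (n + 1) = [0]) ∧
      (π.pos n = [0] → π.pos (n + 1) = [0, 0]) ∧
      (π.pos n = [0, 0] → π.pos (n + 1) = []) := by
    intro n
    have hs := π.step n
    refine ⟨?_, ?_, ?_⟩ <;> intro h <;> rw [h] at hs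
    · rcases hs with ⟨hb, hc⟩ | ⟨i, hi, hm⟩
      · simp [T1, budT] at hb
      · have hm' : ([i] : List ℕ) ∈ domT := hm
        rw [mem_domT] at hm'
        rcases hm' with hm' | hm' | hm'
        · simp at hm'
        · simp only [List.cons.injEq, and_true] at hm'
          rw [hi, hm']; rfl
        · simp at hm'
    · rcases hs with ⟨hb, hc⟩ | ⟨i, hi, hm⟩
      · simp [T1, budT] at hb
      · have hm' : ([0, i] : List ℕ) ∈ domT := hm
        rw [mem_domT] at hm'
        rcases hm' with hm' | hm' | hm'
        · simp at hm'
        · simp at hm'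
        · simp only [List.cons.injEq, and_true, true_and] at hm'
          rw [hi, hm']; rfl
    · rcases hs with ⟨hb, hc⟩ | ⟨i, hi, hm⟩
      · exact hc
      · have hm' : ([0, 0, i] : List ℕ) ∈ domT := hm
        rw [mem_domT] at hm'
        rcases hm' with hm' | hm' | hm' <;> simp at hm'
  have key1 : ∀ (p : List ℕ) (hpp : p = []) (hp : p ∈ T1.dom) (hb : T1.bud p = false),
      RRule.traceStep (T1.rule p hp hb) 0 (Pat xv) (Pat (sTerm xv)) ∧
        RRule.progCore (T1.rule p hp hb) 0 (Pat xv) (Pat (sTerm xv)) := by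
    intro p hpp hp hb
    subst hpp
    rw [T1_rule_nil hp hb]
    exact ⟨trace_r0, prog_r0⟩
  have key2 : ∀ (p : List ℕ) (hpp : p = [0]) (hp : p ∈ T1.dom) (hb : T1.bud p = false),
      RRule.traceStep (T1.rule p hp hb) 0 (Pat (sTerm xv)) (Pat xv) := by
    intro p hpp hp hb
    subst hpp
    rw [T1_rule_zero hp hb]
    exact trace_r1
  refine ⟨0, fun n => if π.pos n = [0] then Pat (sTerm xv) else Pat xv,
    fun n => decide (π.pos n = []), ?_, ?_⟩
  · intro n _
    rcases hmem n with h | h | h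
    · have h1 : π.pos (n + 1) = [0] := (hnext n).1 h
      have hC1 : (if π.pos n = [0] then Pat (sTerm xv) else Pat xv) = Pat xv := by
        rw [h]; simp
      have hC2 : (if π.pos (n + 1) = [0] then Pat (sTerm xv) else Pat xv) = Pat (sTerm xv) := by
        rw [h1]; simp
      have hp : π.pos n ∈ T1.dom := π.mem n
      have hb : T1.bud (π.pos n) = false := by rw [h]; rfl
      right
      refine ⟨hp, hb, 0, by rw [h, h1]; rfl, ?_, ?_⟩
      · simp only [hC1, hC2]
        exact (key1 (π.pos n) h hp hb).1
      · intro _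
        simp only [hC1, hC2]
        exact key1 (π.pos n) h hp hb
    · have h1 : π.pos (n + 1) = [0, 0] := (hnext n).2.1 h
      have hC1 : (if π.pos n = [0] then Pat (sTerm xv) else Pat xv) = Pat (sTerm xv) := by
        rw [h]; simp
      have hC2 : (if π.pos (n + 1) = [0] then Pat (sTerm xv) else Pat xv) = Pat xv := by
        rw [h1]; simp
      have hp : π.pos n ∈ T1.dom := π.mem n
      have hb : T1.bud (π.pos n) = false := by rw [h]; rfl
      right
      refine ⟨hp, hb, 0, by rw [h, h1]; rfl, ?_, ?_⟩
      · simp only [hC1, hC2]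
        exact key2 (π.pos n) h hp hb
      · intro hbb
        simp [h] at hbb
    · have h1 : π.pos (n + 1) = [] := (hnext n).2.2 h
      have hC1 : (if π.pos n = [0] then Pat (sTerm xv) else Pat xv) = Pat xv := by
        rw [h]; simp
      have hC2 : (if π.pos (n + 1) = [0] then Pat (sTerm xv) else Pat xv) = Pat xv := by
        rw [h1]; simp
      left
      refine ⟨by rw [h]; rfl, by rw [h1]; rfl, ?_, ?_, ?_⟩
      · simp only [hC1, hC2]
      · simp only [hC1]
        refine ⟨?_, trivial⟩
        rw [h]
        exact Finset.mem_singleton_self _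
      · simp [h]
  · intro m
    rcases hmem m with h | h | h
    · exact ⟨m, le_rfl, by simp [h]⟩
    · have h1 : π.pos (m + 1) = [0, 0] := (hnext m).2.1 h
      have h2 : π.pos (m + 2) = [] := (hnext (m + 1)).2.2 h1
      exact ⟨m + 2, by omega, by simp [h2]⟩
    · have h1 : π.pos (m + 1) = [] := (hnext m).2.2 h
      exact ⟨m + 1, by omega, by simp [h1]⟩

/-- Case analysis for part 2: any non-(Subst) rule whose conclusion has empty
succedent has exactly one premise, which also has empty succedent. -/
lemma key_rule {c : GSequent (Formula sigP)} {ps : List (GSequent (Formula sigP))}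
    (r : RRule c ps) (h2 : c.2 = ∅) (hn : RRule.rname r ≠ RuleName.subst) :
    ∃ Γ' : Finset (Formula sigP), ps = [(Γ', ∅)] := by
  cases r with
  | ax Γ Δ h =>
    exfalso
    have hΔ : Δ = ∅ := h2
    rw [hΔ] at h
    simp at h
  | wk Γ Δ Γ' Δ' h1 hΔ =>
    have hΔ : Δ = ∅ := h2
    subst hΔ
    have : Δ' = ∅ := Finset.subset_empty.mp hΔ
    exact ⟨Γ', by rw [this]⟩
  | substR Γ Δ θ hθ => exact absurd rfl hn
  | ul' Γ Δ t =>
    have hΔ : Δ = ∅ := h2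
    exact ⟨insert (Pat (sTerm t)) Γ, by rw [hΔ]⟩
  | ur' Γ Δ t =>
    exfalso
    have : insert (Pat t) Δ = ∅ := h2
    simp at this

/-- Along a non-(Subst) rule, the size of the traced token does not decrease,
and strictly increases at progressing steps. -/
lemma core_mono {c : GSequent (Formula sigP)} {ps : List (GSequent (Formula sigP))}
    (r : RRule c ps) (hn : RRule.rname r ≠ RuleName.subst) {i : ℕ} {C C' : Formula sigP}
    (h : RRule.core r i C C') :
    fsize C ≤ fsize C' ∧ (RRule.progCore r i C C' → fsize C < fsize C') := by
  cases r with
  | ax Γ Δ hh =>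
    have hC : C' = C := h
    exact ⟨le_of_eq (by rw [hC]), fun hp => hp.elim⟩
  | wk Γ Δ Γ' Δ' h1 hΔ =>
    have hC : C' = C := h
    exact ⟨le_of_eq (by rw [hC]), fun hp => hp.elim⟩
  | substR Γ Δ θ hθ => exact absurd rfl hn
  | ul' Γ Δ t =>
    constructor
    · rcases h with ⟨_, hC⟩ | ⟨hC, hC'⟩
      · exact le_of_eq (by rw [hC])
      · rw [hC, hC', fsize_Pat, fsize_Pat, tsize_sTerm]; omega
    · rintro ⟨hC, hC'⟩
      rw [hC, hC', fsize_Pat, fsize_Pat, tsize_sTerm]; omega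
  | ur' Γ Δ t =>
    have hC : C' = C := h
    exact ⟨le_of_eq (by rw [hC]), fun hp => hp.elim⟩

/-- The step relation used to build an infinite path through a `(Subst)`-free
proof of a sequent with empty succedent. -/
def NextOK (T : CPreProof RSYS) (p q : List ℕ) : Prop :=
  q ∈ T.dom ∧ (T.seq q).2 = ∅ ∧
    ((T.bud p = true ∧ q = T.comp p) ∨ (∃ i, q = p ++ [i] ∧ p ++ [i] ∈ T.dom))

def pathF (T : CPreProof RSYS)
    (hstep : ∀ p, p ∈ T.dom → (T.seq p).2 = ∅ → {q // NextOK T p q})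
    (h0 : (T.seq []).2 = ∅) : ℕ → {p : List ℕ // p ∈ T.dom ∧ (T.seq p).2 = ∅}
  | 0 => ⟨[], T.root_mem, h0⟩
  | n + 1 =>
    let prev := pathF T hstep h0 n
    let nx := hstep prev.1 prev.2.1 prev.2.2
    ⟨nx.1, nx.2.1, nx.2.2.1⟩

lemma pathF_step (T : CPreProof RSYS)
    (hstep : ∀ p, p ∈ T.dom → (T.seq p).2 = ∅ → {q // NextOK T p q})
    (h0 : (T.seq []).2 = ∅) (n : ℕ) :
    (T.bud ((pathF T hstep h0 n).1) = true ∧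
        (pathF T hstep h0 (n + 1)).1 = T.comp (pathF T hstep h0 n).1) ∨
      (∃ i, (pathF T hstep h0 (n + 1)).1 = (pathF T hstep h0 n).1 ++ [i] ∧
        (pathF T hstep h0 n).1 ++ [i] ∈ T.dom) :=
  (hstep (pathF T hstep h0 n).1 (pathF T hstep h0 n).2.1 (pathF T hstep h0 n).2.2).2.2.2

end

end NonAdmissibility

/-- Non-admissibility of substitution in a restricted cyclic
system. In the cyclic-proof system whose only inference rules are `(UL')`,
`(UR)`, `(Axiom)`, `(Wk)` and `(Subst)` (for `P` defined by the single
production `P(x) ⇐ P(sx)`), the sequent `P(x) ⊢ ⊥` (formalized with the empty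
succedent) is provable, but it is not provable without the rule (Subst). -/
theorem restricted_system_subst_not_admissible :
    RSYS.ProvableWith Set.univ
      ({Pat (Term.fvar 0)}, (∅ : Finset (Formula sigP))) ∧
    ¬ RSYS.ProvableWith {ν | ν ≠ RuleName.subst}
      ({Pat (Term.fvar 0)}, (∅ : Finset (Formula sigP))) := by
  constructor
  · exact ⟨T1, rfl, T1_gtc, fun _ _ => trivial⟩
  · rintro ⟨T, hroot, hGTC, hnames⟩
    have hname_ne : ∀ (p : List ℕ) (hp : p ∈ T.dom) (hb : T.bud p = false),
        RRule.rname (T.rule p hp hb) ≠ RuleName.subst :=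
      fun p hp hb => hnames ⟨p, hp, hb, rfl⟩
    have hstepE : ∀ p, p ∈ T.dom → (T.seq p).2 = ∅ → ∃ q, NextOK T p q := by
      intro p hp h2
      by_cases hb : T.bud p
      · exact ⟨T.comp p, T.comp_mem p hp hb,
          by rw [T.comp_seq p hp hb]; exact h2, Or.inl ⟨hb, rfl⟩⟩
      · have hb' : T.bud p = false := by simpa using hb
        obtain ⟨Γ', hps⟩ := key_rule (T.rule p hp hb') h2 (hname_ne p hp hb')
        have hlen : 0 < (T.prems p).length := by rw [hps]; simp
        have hm : p ++ [0] ∈ T.dom := (T.child_mem p hp hb' 0).mpr hlen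
        have hs := T.child_seq p hp hb' 0 hlen
        have hall : ∀ e ∈ T.prems p, e = (Γ', (∅ : Finset (Formula sigP))) := by
          rw [hps]; simp
        have hmem0 : (T.prems p).get ⟨0, hlen⟩ = (Γ', ∅) :=
          hall _ (List.get_mem _ _)
        refine ⟨p ++ [0], hm, ?_, Or.inr ⟨0, rfl, hm⟩⟩
        rw [hs, hmem0]
    have hE : (T.seq []).2 = ∅ := by rw [hroot]
    have hstepF : ∀ p, p ∈ T.dom → (T.seq p).2 = ∅ → {q // NextOK T p q} :=
      fun p hp h2 => Classical.indefiniteDescription _ (hstepE p hp h2)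
    let π : CPath T :=
      { pos := fun n => (pathF T hstepF hE n).1
        mem := fun n => (pathF T hstepF hE n).2.1
        step := fun n => pathF_step T hstepF hE n }
    obtain ⟨k, C, b, htr, hinf⟩ := hGTC π
    have hmemC : ∀ n, k ≤ n → C n ∈ (T.seq (π.pos n)).1 := by
      intro n hn
      rcases htr n hn with ⟨_, _, _, hant, _⟩ | ⟨hp, hb, i, _, htrace, _⟩
      · exact hant.1
      · exact htrace.1
    have tr_mono : ∀ n, k ≤ n →
        fsize (C n) ≤ fsize (C (n + 1)) ∧
          (b n = true → fsize (C n) < fsize (C (n + 1))) := by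
      intro n hn
      rcases htr n hn with ⟨_, _, hCC, _, hbf⟩ | ⟨hp, hb, i, _, htrace, hprog⟩
      · exact ⟨le_of_eq (by rw [hCC]), fun hbt => by rw [hbf] at hbt; cases hbt⟩
      · have hcore : RRule.core (T.rule (π.pos n) hp hb) i (C n) (C (n + 1)) :=
          htrace.2.2.2.2
        have hc := core_mono (T.rule (π.pos n) hp hb) (hname_ne _ hp hb) hcore
        exact ⟨hc.1, fun hbt => hc.2 ((hprog hbt).2)⟩
    have mono : ∀ m n, k ≤ m → m ≤ n → fsize (C m) ≤ fsize (C n) := by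
      intro m n hk h
      induction n with
      | zero =>
        have : m = 0 := Nat.le_zero.mp h
        exact le_of_eq (by rw [this])
      | succ n ih =>
        by_cases h' : m ≤ n
        · exact le_trans (ih h') ((tr_mono n (le_trans hk h')).1)
        · have : m = n + 1 := by omega
          exact le_of_eq (by rw [this])
    have unb : ∀ j, ∃ n, k ≤ n ∧ j ≤ fsize (C n) := by
      intro j
      induction j with
      | zero => exact ⟨k, le_rfl, Nat.zero_le _⟩
      | succ j ih =>
        obtain ⟨n, hkn, hj⟩ := ih
        obtain ⟨n', hn', hb'⟩ := hinf n
        refine ⟨n' + 1, by omega, ?_⟩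
        have h1 := mono n n' hkn hn'
        have h2 := (tr_mono n' (by omega)).2 hb'
        omega
    have hbound : ∀ n, k ≤ n → fsize (C n) ≤
        T.fin.toFinset.sup (fun p => (T.seq p).1.sup fsize) := by
      intro n hn
      refine le_trans (Finset.le_sup (hmemC n hn))
        (Finset.le_sup (f := fun p => (T.seq p).1.sup fsize) ?_)
      exact (Set.Finite.mem_toFinset T.fin).mpr (π.mem n)
    obtain ⟨n, hkn, hj⟩ := unb (T.fin.toFinset.sup (fun p => (T.seq p).1.sup fsize) + 1)
    have := hbound n hkn
    omega

end CyclicProofs
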